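/- arXiv:1310.0472 — 2 statements merged into one kernel-verified Lean document; each statement's English description precedes it below -/
import Mathlib

section
/- For α ∈ (0,2), the mean square displacement ⟨ΔX²_n⟩ = Σ_{j=−n}^n A_j j² of the slicer map S_α with uniform initial distribution on cell 0 satisfies: lim_{n→∞} ⟨ΔX²_n⟩/n^γ = +∞ for 0 ≤ γ < 2−α, = 4/(2−α) for γ = 2−α, and = 0 for 2−α < γ ≤ 2. In particular the transport exponent is γ^t = 2−α. -/
open Filter

noncomputable def ella (α : ℝ) (m : ℤ) : ℝ :=
  (((|m| : ℤ) : ℝ) + (2:ℝ) ^ (1/α)) ^ (-α)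

/-- The coarse-grained distribution of the slicer map `S_α` at time `n`:
`A_{±n} = ℓ_{n-1}`, `A_j = ℓ_{|j|-1} - ℓ_{|j|+1}` for `0 < |j| < n` with
`j ≡ n (mod 2)`, `A_0 = 2(ℓ_0 - ℓ_1)` for even `n`, and `A_j = 0` otherwise. -/
noncomputable def Acg (α : ℝ) (n : ℕ) (j : ℤ) : ℝ :=
  if |j| = (n:ℤ) then ella α ((n:ℤ) - 1)
  else if j = 0 ∧ Even n then 2 * (ella α 0 - ella α 1)
  else if 0 < |j| ∧ |j| < (n:ℤ) ∧ j % 2 = (n:ℤ) % 2 then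
    ella α (|j| - 1) - ella α (|j| + 1)
  else 0

/-- The mean square displacement (`p = 2`) and more generally the `p`-th moment of
the coarse-grained distribution. -/
noncomputable def momentCG (α : ℝ) (p : ℕ) (n : ℕ) : ℝ :=
  ∑ j ∈ Finset.Icc (-(n:ℤ)) (n:ℤ), Acg α n j * (j:ℝ) ^ p

lemma sum_Icc_symm_succ (F : ℤ → ℝ) (N : ℤ) (hN : 0 ≤ N) :
    ∑ j ∈ Finset.Icc (-(N+1)) (N+1), F j
      = F (-(N+1)) + F (N+1) + ∑ j ∈ Finset.Icc (-N) N, F j := by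
  have h1 : Finset.Icc (-(N+1)) (N+1) = insert (-(N+1)) (insert (N+1) (Finset.Icc (-N) N)) := by
    ext j; simp only [Finset.mem_Icc, Finset.mem_insert]; omega
  have h2 : -(N+1) ∉ insert (N+1) (Finset.Icc (-N) N) := by
    simp only [Finset.mem_Icc, Finset.mem_insert]; omega
  have h3 : (N+1) ∉ Finset.Icc (-N) N := by
    simp only [Finset.mem_Icc]; omega
  rw [h1, Finset.sum_insert h2, Finset.sum_insert h3]; ring

lemma acg_shift (α : ℝ) (n : ℕ) (j : ℤ) (hj : |j| ≤ (n:ℤ)) :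
    Acg α (n+2) j * (j:ℝ)^2
      = Acg α n j * (j:ℝ)^2 - (if |j| = (n:ℤ) then ella α ((n:ℤ)+1) * (j:ℝ)^2 else 0) := by
  rcases eq_or_ne j 0 with rfl | hj0
  · simp
  have h0 : 0 < |j| := abs_pos.2 hj0
  have hcast : ((n+2:ℕ):ℤ) = (n:ℤ)+2 := by push_cast; ring
  by_cases hjn : |j| = (n:ℤ)
  · have hpm : j = (n:ℤ) ∨ j = -(n:ℤ) := by rcases abs_cases j with ⟨h1,h2⟩|⟨h1,h2⟩ <;> omega
    have hpar : j % 2 = ((n+2:ℕ):ℤ) % 2 := by rw [hcast]; rcases hpm with rfl|rfl <;> omega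
    rw [if_pos hjn]
    unfold Acg
    rw [if_neg (by omega), if_neg (by exact fun h => hj0 h.1),
      if_pos ⟨h0, by omega, hpar⟩, if_pos hjn, hjn]
    ring
  · rw [if_neg hjn]
    have hlt : |j| < (n:ℤ) := lt_of_le_of_ne hj hjn
    have A1 : ¬(|j| = ((n+2:ℕ):ℤ)) := by omega
    have B1 : ¬(j = 0 ∧ Even (n+2)) := fun h => hj0 h.1
    have B2 : ¬(j = 0 ∧ Even n) := fun h => hj0 h.1
    have : Acg α (n+2) j = Acg α n j := by
      unfold Acg
      by_cases hp : j % 2 = (n:ℤ) % 2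
      · rw [if_neg A1, if_neg B1, if_pos ⟨h0, by omega, by omega⟩,
          if_neg hjn, if_neg B2, if_pos ⟨h0, hlt, hp⟩]
      · have C1 : ¬(0 < |j| ∧ |j| < ((n+2:ℕ):ℤ) ∧ j % 2 = ((n+2:ℕ):ℤ) % 2) := by
          intro h; apply hp; have := h.2.2; omega
        have C2 : ¬(0 < |j| ∧ |j| < (n:ℤ) ∧ j % 2 = (n:ℤ) % 2) := fun h => hp h.2.2
        rw [if_neg A1, if_neg B1, if_neg C1, if_neg hjn, if_neg B2, if_neg C2]
    rw [this]; ring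

lemma acg_top (α : ℝ) (n : ℕ) :
    Acg α (n+2) ((n:ℤ)+2) = ella α ((n:ℤ)+1) ∧
    Acg α (n+2) (-((n:ℤ)+2)) = ella α ((n:ℤ)+1) ∧
    Acg α (n+2) ((n:ℤ)+1) = 0 ∧ Acg α (n+2) (-((n:ℤ)+1)) = 0 := by
  have ha1 : |(n:ℤ)+2| = (n:ℤ)+2 := abs_of_nonneg (by positivity)
  have ha2 : |(n:ℤ)+1| = (n:ℤ)+1 := abs_of_nonneg (by positivity)
  refine ⟨?_, ?_, ?_, ?_⟩ <;> unfold Acg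
  · rw [if_pos (by rw [ha1]; omega)]; congr 1; push_cast; ring
  · rw [if_pos (by rw [abs_neg, ha1]; omega)]; congr 1; push_cast; ring
  · have c1 : ¬(|(n:ℤ)+1| = ((n+2:ℕ):ℤ)) := by rw [ha2]; omega
    have c2 : ¬((n:ℤ)+1 = 0 ∧ Even (n+2)) := by intro h; have := h.1; omega
    have c3 : ¬(0 < |(n:ℤ)+1| ∧ |(n:ℤ)+1| < ((n+2:ℕ):ℤ) ∧ ((n:ℤ)+1) % 2 = ((n+2:ℕ):ℤ) % 2) := by
      intro h; have := h.2.2; omega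
    rw [if_neg c1, if_neg c2, if_neg c3]
  · have ha2' : |(-((n:ℤ)+1))| = (n:ℤ)+1 := by rw [abs_neg, ha2]
    have c1 : ¬(|(-((n:ℤ)+1))| = ((n+2:ℕ):ℤ)) := by rw [ha2']; omega
    have c2 : ¬(-((n:ℤ)+1) = 0 ∧ Even (n+2)) := by intro h; have := h.1; omega
    have c3 : ¬(0 < |(-((n:ℤ)+1))| ∧ |(-((n:ℤ)+1))| < ((n+2:ℕ):ℤ) ∧ (-((n:ℤ)+1)) % 2 = ((n+2:ℕ):ℤ) % 2) := by
      intro h; have := h.2.2; omega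
    rw [if_neg c1, if_neg c2, if_neg c3]

lemma key_if_sum (α : ℝ) (n : ℕ) :
    ∑ j ∈ Finset.Icc (-(n:ℤ)) (n:ℤ),
      (if |j| = (n:ℤ) then ella α ((n:ℤ)+1) * (j:ℝ)^2 else 0)
      = 2 * ella α ((n:ℤ)+1) * (n:ℝ)^2 := by
  cases n with
  | zero => simp
  | succ k =>
    have hk : ((k+1:ℕ):ℤ) = (k:ℤ)+1 := by push_cast; ring
    have ha : |(k:ℤ)+1| = (k:ℤ)+1 := abs_of_nonneg (by positivity)
    rw [hk, sum_Icc_symm_succ _ _ (by positivity)]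
    rw [if_pos (show |(-((k:ℤ)+1))| = (k:ℤ)+1 by rw [abs_neg, ha]), if_pos (show |(k:ℤ)+1| = (k:ℤ)+1 from ha)]
    rw [Finset.sum_eq_zero (fun j hj => by
      rw [if_neg]; simp only [Finset.mem_Icc] at hj
      rcases abs_cases j with ⟨h1,h2⟩|⟨h1,h2⟩ <;> omega)]
    push_cast; ring

lemma momentCG_step (α : ℝ) (n : ℕ) :
    momentCG α 2 (n+2) = momentCG α 2 n + 8*((n:ℝ)+1)*ella α ((n:ℤ)+1) := by
  obtain ⟨h1, h2, h3, h4⟩ := acg_top α n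
  unfold momentCG
  have hc2 : ((n+2:ℕ):ℤ) = ((n:ℤ)+1)+1 := by push_cast; ring
  rw [hc2, sum_Icc_symm_succ _ _ (by positivity), sum_Icc_symm_succ _ _ (by positivity)]
  have hinner : ∑ j ∈ Finset.Icc (-(n:ℤ)) (n:ℤ), Acg α (n+2) j * (j:ℝ)^2
      = (∑ j ∈ Finset.Icc (-(n:ℤ)) (n:ℤ), Acg α n j * (j:ℝ)^2)
        - 2 * ella α ((n:ℤ)+1) * (n:ℝ)^2 := by
    rw [← key_if_sum α n, ← Finset.sum_sub_distrib]
    refine Finset.sum_congr rfl (fun j hj => ?_)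
    simp only [Finset.mem_Icc] at hj
    exact acg_shift α n j (abs_le.mpr ⟨hj.1, hj.2⟩)
  have e1 : (((n:ℤ)+1)+1) = ((n:ℤ)+2) := by ring
  rw [e1, hinner, h1, h2, h3, h4]
  push_cast
  ring

noncomputable def SsumF (α : ℝ) (n : ℕ) : ℝ :=
  8 * (∑ m ∈ Finset.range n, if m % 2 ≠ n % 2 then (m:ℝ) * ella α (m:ℤ) else 0)
    + (if n % 2 = 1 then 2 * ella α 0 else 0)

lemma momentCG_closed (α : ℝ) : ∀ n, momentCG α 2 n = SsumF α n := by
  intro n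
  induction n using Nat.strong_induction_on with
  | _ n ih =>
    obtain _ | _ | k := n
    · simp [momentCG, SsumF]
    · unfold momentCG SsumF
      rw [show ((1:ℕ):ℤ) = 0+1 by ring, sum_Icc_symm_succ _ _ le_rfl]
      rw [show -(0:ℤ) = 0 by ring, Finset.Icc_self, Finset.sum_singleton]
      unfold Acg
      norm_num
      ring
    · rw [momentCG_step, ih k (by omega)]
      unfold SsumF
      have hmod : (k+2) % 2 = k % 2 := by omega
      rw [Finset.sum_range_succ, Finset.sum_range_succ]
      simp only [hmod]
      rw [show (if k % 2 ≠ k % 2 then (k:ℝ) * ella α (k:ℤ) else 0) = 0 from if_neg (by omega)]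
      rw [if_pos (show (k+1) % 2 ≠ k % 2 by omega)]
      push_cast
      ring

lemma bern_ge {x γ : ℝ} (hx : 0 < x) (hγ : 1 ≤ γ) :
    x^γ + γ * x^(γ-1) ≤ (x+1)^γ := by
  have h1 : 1 + γ * (1/x) ≤ (1 + 1/x)^γ :=
    one_add_mul_self_le_rpow_one_add (le_trans (by norm_num : (-1:ℝ) ≤ 0) (by positivity)) hγ
  have hx1 : (0:ℝ) < 1 + 1/x := by positivity
  have key : (x+1)^γ = x^γ * (1+1/x)^γ := by
    rw [← Real.mul_rpow hx.le hx1.le]; congr 1; field_simp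
  have hxg : 0 < x^γ := Real.rpow_pos_of_pos hx γ
  have hgm : x^(γ-1) = x^γ / x := by
    rw [Real.rpow_sub hx, Real.rpow_one]
  rw [key, hgm]
  calc x^γ + γ * (x^γ/x) = x^γ * (1 + γ*(1/x)) := by field_simp
  _ ≤ x^γ * (1+1/x)^γ := by nlinarith
lemma bern_ge' {x γ : ℝ} (hx : 0 < x) (hγ : 1 ≤ γ) :
    (x+1)^γ ≤ x^γ + γ * (x+1)^(γ-1) := by
  have hx1 : (0:ℝ) < x + 1 := by linarith
  have h1 : 1 + γ * (-(1/(x+1))) ≤ (1 + (-(1/(x+1))))^γ := by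
    apply one_add_mul_self_le_rpow_one_add _ hγ
    rw [neg_le, neg_neg]
    rw [div_le_one hx1]; linarith
  have key : (1 + (-(1/(x+1))))^γ = x^γ / (x+1)^γ := by
    rw [show (1 + (-(1/(x+1)))) = x/(x+1) by field_simp; ring, Real.div_rpow hx.le hx1.le]
  have hxg : 0 < (x+1)^γ := Real.rpow_pos_of_pos hx1 γ
  have hgm : (x+1)^(γ-1) = (x+1)^γ / (x+1) := by
    rw [Real.rpow_sub hx1, Real.rpow_one]
  rw [key] at h1
  have h2 : ((x+1)^γ) * (1 - γ/(x+1)) ≤ x^γ := by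
    have := mul_le_mul_of_nonneg_left h1 hxg.le
    calc ((x+1)^γ) * (1 - γ/(x+1)) = (x+1)^γ * (1 + γ * (-(1/(x+1)))) := by ring
    _ ≤ (x+1)^γ * (x^γ/(x+1)^γ) := this
    _ = x^γ := by field_simp
  rw [hgm]
  have : (x+1)^γ * (1 - γ/(x+1)) = (x+1)^γ - γ * ((x+1)^γ/(x+1)) := by field_simp
  linarith [this ▸ h2]
lemma bern_le {x γ : ℝ} (hx : 0 < x) (hγ0 : 0 ≤ γ) (hγ : γ ≤ 1) :
    (x+1)^γ ≤ x^γ + γ * x^(γ-1) := by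
  have h1 : (1 + 1/x)^γ ≤ 1 + γ * (1/x) :=
    rpow_one_add_le_one_add_mul_self (le_trans (by norm_num : (-1:ℝ) ≤ 0) (by positivity)) hγ0 hγ
  have hx1 : (0:ℝ) < 1 + 1/x := by positivity
  have key : (x+1)^γ = x^γ * (1+1/x)^γ := by
    rw [← Real.mul_rpow hx.le hx1.le]; congr 1; field_simp
  have hxg : 0 < x^γ := Real.rpow_pos_of_pos hx γ
  have hgm : x^(γ-1) = x^γ / x := by
    rw [Real.rpow_sub hx, Real.rpow_one]
  rw [key, hgm]
  calc x^γ * (1+1/x)^γ ≤ x^γ * (1 + γ*(1/x)) := by nlinarith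
  _ = x^γ + γ * (x^γ/x) := by field_simp
lemma bern_le' {x γ : ℝ} (hx : 0 < x) (hγ0 : 0 ≤ γ) (hγ : γ ≤ 1) :
    x^γ + γ * (x+1)^(γ-1) ≤ (x+1)^γ := by
  have hx1 : (0:ℝ) < x + 1 := by linarith
  have h1 : (1 + (-(1/(x+1))))^γ ≤ 1 + γ * (-(1/(x+1))) := by
    apply rpow_one_add_le_one_add_mul_self _ hγ0 hγ
    rw [neg_le, neg_neg, div_le_one hx1]; linarith
  have key : (1 + (-(1/(x+1))))^γ = x^γ / (x+1)^γ := by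
    rw [show (1 + (-(1/(x+1)))) = x/(x+1) by field_simp; ring, Real.div_rpow hx.le hx1.le]
  have hxg : 0 < (x+1)^γ := Real.rpow_pos_of_pos hx1 γ
  have hgm : (x+1)^(γ-1) = (x+1)^γ / (x+1) := by
    rw [Real.rpow_sub hx1, Real.rpow_one]
  rw [key] at h1
  have h2 : x^γ ≤ ((x+1)^γ) * (1 - γ/(x+1)) := by
    have := mul_le_mul_of_nonneg_left h1 hxg.le
    calc x^γ = (x+1)^γ * (x^γ/(x+1)^γ) := by field_simp
    _ ≤ (x+1)^γ * (1 + γ * (-(1/(x+1)))) := this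
    _ = (x+1)^γ * (1 - γ/(x+1)) := by ring
  rw [hgm]
  have : (x+1)^γ * (1 - γ/(x+1)) = (x+1)^γ - γ * ((x+1)^γ/(x+1)) := by field_simp
  linarith [this ▸ h2]

lemma bracket {x γ : ℝ} (hx : 0 < x) (hγ0 : 0 < γ) (hγ2 : γ ≤ 2) :
    |((x+1)^γ - x^γ)/γ - x^(γ-1)| ≤ |(x+1)^(γ-1) - x^(γ-1)| := by
  have h1 := le_abs_self ((x+1)^(γ-1) - x^(γ-1))
  have h2 := neg_abs_le ((x+1)^(γ-1) - x^(γ-1))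
  rcases le_total γ 1 with hγ | hγ
  · have a1 := bern_le hx hγ0.le hγ
    have a2 := bern_le' hx hγ0.le hγ
    rw [abs_le]; constructor
    · have : (x+1)^(γ-1) ≤ ((x+1)^γ - x^γ)/γ := by
        rw [le_div_iff₀ hγ0]; linarith
      linarith
    · have : ((x+1)^γ - x^γ)/γ ≤ x^(γ-1) := by
        rw [div_le_iff₀ hγ0]; linarith
      linarith
  · have a1 := bern_ge hx hγ
    have a2 := bern_ge' hx hγ
    rw [abs_le]; constructor
    · have : x^(γ-1) ≤ ((x+1)^γ - x^γ)/γ := by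
        rw [le_div_iff₀ hγ0]; linarith
      linarith
    · have : ((x+1)^γ - x^γ)/γ ≤ (x+1)^(γ-1) := by
        rw [div_le_iff₀ hγ0]; linarith
      linarith

lemma base1_tendsto (c e : ℝ) :
    Tendsto (fun n : ℕ => (1 + c/(n:ℝ))^e) atTop (nhds 1) := by
  have h1 : Tendsto (fun n : ℕ => 1 + c/(n:ℝ)) atTop (nhds 1) := by
    simpa using tendsto_const_nhds.add (tendsto_const_div_atTop_nhds_zero_nat c)
  have h2 : ContinuousAt (fun x : ℝ => x^e) 1 :=
    Real.continuousAt_rpow_const 1 e (Or.inl one_ne_zero)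
  have := h2.tendsto.comp h1
  simpa [Real.one_rpow, Function.comp_def] using this

lemma rat_eventually (c e d : ℝ) (hc : 0 ≤ c) :
    ∀ᶠ n : ℕ in atTop, ((n:ℝ)+c)^e / (n:ℝ)^(e+d) = (1 + c/(n:ℝ))^e * (n:ℝ)^(-d) := by
  filter_upwards [eventually_ge_atTop 1] with n hn
  have hn0 : (0:ℝ) < (n:ℝ) := by exact_mod_cast hn
  have h1 : ((n:ℝ)+c) = (n:ℝ) * (1 + c/(n:ℝ)) := by field_simp
  have h2 : (0:ℝ) ≤ 1 + c/(n:ℝ) := by positivity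
  rw [h1, Real.mul_rpow hn0.le h2, Real.rpow_add hn0 e d]
  have h3 : (n:ℝ)^e ≠ 0 := ne_of_gt (Real.rpow_pos_of_pos hn0 e)
  have h4 : (n:ℝ)^d ≠ 0 := ne_of_gt (Real.rpow_pos_of_pos hn0 d)
  rw [Real.rpow_neg hn0.le]
  field_simp

lemma rat0 (c e e' : ℝ) (hc : 0 ≤ c) (h : e < e') :
    Tendsto (fun n : ℕ => ((n:ℝ)+c)^e / (n:ℝ)^e') atTop (nhds 0) := by
  have hd : 0 < e' - e := by linarith
  have h2 : Tendsto (fun n : ℕ => (n:ℝ)^(-(e'-e))) atTop (nhds 0) :=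
    (tendsto_rpow_neg_atTop hd).comp tendsto_natCast_atTop_atTop
  have h3 := (base1_tendsto c e).mul h2
  rw [mul_zero] at h3
  refine Tendsto.congr' ?_ h3
  have := rat_eventually c e (e'-e) hc
  filter_upwards [this] with n hn
  rw [← hn]; congr 1; ring

lemma rat1 (c e : ℝ) (hc : 0 ≤ c) :
    Tendsto (fun n : ℕ => ((n:ℝ)+c)^e / (n:ℝ)^e) atTop (nhds 1) := by
  have h3 := (base1_tendsto c e).mul (tendsto_const_nhds (x := (1:ℝ)) (f := atTop (α := ℕ)))
  rw [mul_one] at h3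
  refine Tendsto.congr' ?_ h3
  have := rat_eventually c e 0 hc
  filter_upwards [this, eventually_ge_atTop 1] with n hn hn1
  have hn0 : (0:ℝ) < (n:ℝ) := by exact_mod_cast hn1
  rw [show (1 + c/(n:ℝ))^e * 1 = (1 + c/(n:ℝ))^e * (n:ℝ)^(-(0:ℝ)) by
    rw [neg_zero, Real.rpow_zero], ← hn]
  congr 1; ring

lemma inv_rpow_tendsto (e : ℝ) (he : 0 < e) :
    Tendsto (fun n : ℕ => ((n:ℝ)^e)⁻¹) atTop (nhds 0) :=
  (Filter.Tendsto.inv_tendsto_atTop ((tendsto_rpow_atTop he).comp tendsto_natCast_atTop_atTop))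

lemma sum_rpow_asymp (c γ : ℝ) (hc : 1 ≤ c) (hγ0 : 0 < γ) (hγ2 : γ ≤ 2) :
    Tendsto (fun n : ℕ => (∑ m ∈ Finset.range n, ((m:ℝ)+c)^(γ-1)) / (n:ℝ)^γ)
      atTop (nhds (1/γ)) := by
  have hc0 : (0:ℝ) < c := by linarith
  set t : ℕ → ℝ := fun m => ((m:ℝ)+c)^(γ-1) with ht
  set g : ℕ → ℝ := fun m => ((m:ℝ)+c)^γ with hg
  have hcast : ∀ m : ℕ, ((m+1:ℕ):ℝ) + c = ((m:ℝ)+c) + 1 := by intro m; push_cast; ring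
  have hmc : ∀ m : ℕ, (0:ℝ) < (m:ℝ)+c := fun m => by positivity
  have hδ : ∀ m : ℕ, |t m - (g (m+1) - g m)/γ| ≤ |t (m+1) - t m| := by
    intro m
    have e1 : ((m+1:ℕ):ℝ) + c = ((m:ℝ)+c)+1 := by push_cast; ring
    simp only [ht, hg, e1]
    rw [abs_sub_comm]
    exact bracket (hmc m) hγ0 hγ2
  -- telescoping bound on sum of |t (m+1) - t m|
  have habs : ∀ n : ℕ, |(∑ m ∈ Finset.range n, t m) - (g n - g 0)/γ| ≤ t n + t 0 := by
    intro n
    have e1 : (∑ m ∈ Finset.range n, t m) - (g n - g 0)/γ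
        = ∑ m ∈ Finset.range n, (t m - (g (m+1) - g m)/γ) := by
      rw [Finset.sum_sub_distrib, ← Finset.sum_div, Finset.sum_range_sub (fun m => g m)]
    rw [e1]
    calc |∑ m ∈ Finset.range n, (t m - (g (m+1) - g m)/γ)|
        ≤ ∑ m ∈ Finset.range n, |t m - (g (m+1) - g m)/γ| := Finset.abs_sum_le_sum_abs _ _
    _ ≤ ∑ m ∈ Finset.range n, |t (m+1) - t m| := Finset.sum_le_sum (fun m _ => hδ m)
    _ ≤ t n + t 0 := by
        rcases le_total γ 1 with hγ | hγ
        · have hmono : ∀ m : ℕ, t (m+1) ≤ t m := by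
            intro m
            apply Real.rpow_le_rpow_of_nonpos (hmc m) (by rw [hcast m]; linarith) (by linarith)
          have : ∀ m ∈ Finset.range n, |t (m+1) - t m| = t m - t (m+1) := by
            intro m _; rw [abs_of_nonpos (by linarith [hmono m])]; ring
          rw [Finset.sum_congr rfl this]
          have : ∑ m ∈ Finset.range n, (t m - t (m+1))
              = -(∑ m ∈ Finset.range n, (t (m+1) - t m)) := by
            rw [← Finset.sum_neg_distrib]; exact Finset.sum_congr rfl (fun m _ => by ring)
          rw [this, Finset.sum_range_sub (fun m => t m)]
          have h1 : 0 ≤ t n := Real.rpow_nonneg (hmc n).le _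
          linarith
        · have hmono : ∀ m : ℕ, t m ≤ t (m+1) := by
            intro m
            apply Real.rpow_le_rpow (hmc m).le (by rw [hcast m]; linarith) (by linarith)
          have : ∀ m ∈ Finset.range n, |t (m+1) - t m| = t (m+1) - t m := by
            intro m _; rw [abs_of_nonneg (by linarith [hmono m])]
          rw [Finset.sum_congr rfl this, Finset.sum_range_sub (fun m => t m)]
          have h1 : 0 ≤ t 0 := Real.rpow_nonneg (hmc 0).le _
          linarith
  -- main term limit
  have hg0 : g 0 = c^γ := by simp [hg]
  have hmain : Tendsto (fun n : ℕ => ((g n - g 0)/γ) / (n:ℝ)^γ) atTop (nhds (1/γ)) := by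
    have h1 : Tendsto (fun n : ℕ => ((n:ℝ)+c)^γ/(n:ℝ)^γ * (1/γ) - (c^γ/γ) * ((n:ℝ)^γ)⁻¹)
        atTop (nhds (1 * (1/γ) - (c^γ/γ) * 0)) :=
      ((rat1 c γ (by linarith)).mul_const _).sub ((inv_rpow_tendsto γ hγ0).const_mul _)
    rw [one_mul, mul_zero, sub_zero] at h1
    refine Tendsto.congr (fun n => ?_) h1
    rw [hg0]
    simp only [hg, div_eq_mul_inv]
    ring
  -- error term
  have herr : Tendsto (fun n : ℕ => ((∑ m ∈ Finset.range n, t m) - (g n - g 0)/γ) / (n:ℝ)^γ)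
      atTop (nhds 0) := by
    have h1 : Tendsto (fun n : ℕ => ((n:ℝ)+c)^(γ-1)/(n:ℝ)^γ + c^(γ-1) * ((n:ℝ)^γ)⁻¹)
        atTop (nhds (0 + c^(γ-1) * 0)) :=
      (rat0 c (γ-1) γ (by linarith) (by linarith)).add ((inv_rpow_tendsto γ hγ0).const_mul _)
    rw [mul_zero, add_zero] at h1
    rw [tendsto_zero_iff_abs_tendsto_zero]
    refine squeeze_zero' (Eventually.of_forall (fun n => abs_nonneg _)) ?_ h1
    filter_upwards [eventually_ge_atTop 1] with n hn
    have hn0 : (0:ℝ) < (n:ℝ) := by exact_mod_cast hn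
    have hp : (0:ℝ) < (n:ℝ)^γ := Real.rpow_pos_of_pos hn0 γ
    simp only [Function.comp_apply]
    rw [abs_div, abs_of_pos hp]
    have h2 : |(∑ m ∈ Finset.range n, t m) - (g n - g 0)/γ| / (n:ℝ)^γ
        ≤ (t n + t 0)/(n:ℝ)^γ := by gcongr; exact habs n
    refine h2.trans_eq ?_
    simp only [ht, Nat.cast_zero, zero_add, div_eq_mul_inv]
    ring
  have hsum := hmain.add herr
  rw [add_zero] at hsum
  refine Tendsto.congr (fun n => ?_) hsum
  rw [← add_div]
  congr 1
  ring

lemma q_term_bound {c β : ℝ} (hc : 1 ≤ c) (hβ0 : 0 < β) (hβ1 : β < 1) (x : ℝ) (hx : 1 ≤ x) :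
    x^(-β) ≤ (2/(1-β)) * ((x+1)^(1-β) - x^(1-β)) := by
  have hx0 : (0:ℝ) < x := by linarith
  have h1 : x^(1-β) + (1-β) * (x+1)^((1-β)-1) ≤ (x+1)^(1-β) :=
    bern_le' hx0 (by linarith) (by linarith)
  have e1 : (1-β)-1 = -β := by ring
  rw [e1] at h1
  -- (x+1)^(-β) ≥ (1/2) * x^(-β)
  have h2 : (2*x)^(-β) ≤ (x+1)^(-β) :=
    Real.rpow_le_rpow_of_nonpos (by linarith) (by linarith) (by linarith)
  have h3 : (2*x)^(-β) = 2^(-β) * x^(-β) := Real.mul_rpow (by norm_num) hx0.le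
  have h4 : (2:ℝ)^(-(1:ℝ)) ≤ 2^(-β) :=
    Real.rpow_le_rpow_of_exponent_le (by norm_num) (by linarith)
  have h5 : (2:ℝ)^(-(1:ℝ)) = 1/2 := by
    rw [Real.rpow_neg_one]; norm_num
  have h6 : (0:ℝ) ≤ x^(-β) := Real.rpow_nonneg hx0.le _
  have h7 : (1/2) * x^(-β) ≤ (x+1)^(-β) := by
    calc (1/2) * x^(-β) ≤ 2^(-β) * x^(-β) := by rw [← h5]; nlinarith
    _ = (2*x)^(-β) := h3.symm
    _ ≤ (x+1)^(-β) := h2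
  have h8 : (1-β) * ((1/2) * x^(-β)) ≤ (x+1)^(1-β) - x^(1-β) := by nlinarith
  have hb : (0:ℝ) < 1 - β := by linarith
  rw [div_mul_eq_mul_div, le_div_iff₀ hb]
  nlinarith

lemma q_sum_bound {c β : ℝ} (hc : 1 ≤ c) (hβ0 : 0 < β) (hβ1 : β < 1) (n : ℕ) :
    ∑ m ∈ Finset.range n, ((m:ℝ)+c)^(-β) ≤ (2/(1-β)) * ((n:ℝ)+c)^(1-β) := by
  have key : ∀ m : ℕ, ((m:ℝ)+c)^(-β)
      ≤ (2/(1-β)) * ((((m+1:ℕ):ℝ)+c)^(1-β) - (((m:ℕ):ℝ)+c)^(1-β)) := by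
    intro m
    have e1 : ((m+1:ℕ):ℝ) + c = (((m:ℝ)+c)+1) := by push_cast; ring
    rw [e1]
    exact q_term_bound hc hβ0 hβ1 _ (by have : (0:ℝ) ≤ (m:ℝ) := Nat.cast_nonneg m; linarith)
  calc ∑ m ∈ Finset.range n, ((m:ℝ)+c)^(-β)
      ≤ ∑ m ∈ Finset.range n, (2/(1-β)) * ((((m+1:ℕ):ℝ)+c)^(1-β) - (((m:ℕ):ℝ)+c)^(1-β)) :=
        Finset.sum_le_sum (fun m _ => key m)
  _ = (2/(1-β)) * (((n:ℝ)+c)^(1-β) - ((0:ℝ)+c)^(1-β)) := by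
        rw [← Finset.mul_sum, Finset.sum_range_sub (fun m => (((m:ℕ):ℝ)+c)^(1-β))]
        norm_num
  _ ≤ (2/(1-β)) * ((n:ℝ)+c)^(1-β) := by
        have h1 : (0:ℝ) ≤ ((0:ℝ)+c)^(1-β) := Real.rpow_nonneg (by linarith) _
        have hb : (0:ℝ) < 1-β := by linarith
        have h2 : (0:ℝ) ≤ 2/(1-β) := by positivity
        nlinarith

lemma alt_bound {h : ℕ → ℝ} (hmono : ∀ m, h (m+1) ≤ h m) (hpos : ∀ m, 0 ≤ h m) (n : ℕ) :
    0 ≤ ∑ m ∈ Finset.range n, (-1:ℝ)^m * h m ∧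
      ∑ m ∈ Finset.range n, (-1:ℝ)^m * h m ≤ h 0 := by
  set A : ℕ → ℝ := fun n => ∑ m ∈ Finset.range n, (-1:ℝ)^m * h m with hA
  suffices hP : ∀ n, 0 ≤ A n ∧ A n ≤ h 0 ∧ (Even n → A n + h n ≤ h 0) ∧ (¬ Even n → h n ≤ A n) by
    exact ⟨(hP n).1, (hP n).2.1⟩
  intro n
  induction n with
  | zero => simp [hA, hpos 0]
  | succ k ih =>
    obtain ⟨i1, i2, i3, i4⟩ := ih
    have hstep : A (k+1) = A k + (-1:ℝ)^k * h k := by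
      simp [hA, Finset.sum_range_succ]
    rcases Nat.even_or_odd k with he | ho
    · have hp : (-1:ℝ)^k = 1 := he.neg_one_pow
      have he1 : ¬ Even (k+1) := by simp [Nat.even_add_one, he]
      have hk0 := hpos k
      have hk1 := hmono k
      refine ⟨by rw [hstep, hp]; linarith, by rw [hstep, hp]; linarith [i3 he], ?_, ?_⟩
      · intro hcon; exact absurd hcon he1
      · intro _; rw [hstep, hp]; linarith
    · have hp : (-1:ℝ)^k = -1 := ho.neg_one_pow
      have he1 : Even (k+1) := Odd.add_one ho
      have hk0 := hpos k
      have hk1 := hmono k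
      have i4' := i4 (Nat.not_even_iff_odd.mpr ho)
      refine ⟨by rw [hstep, hp]; linarith, by rw [hstep, hp]; linarith, ?_, ?_⟩
      · intro _; rw [hstep, hp]; linarith
      · intro hcon; exact absurd he1 hcon

lemma alt_rpow_bound (c s : ℝ) (hc : 1 ≤ c) (hs1 : s ≤ 1) (n : ℕ) :
    |∑ m ∈ Finset.range n, (-1:ℝ)^m * ((m:ℝ)+c)^s| ≤ 2*((n:ℝ)+c)^s + 2*c^s := by
  have hc0 : (0:ℝ) < c := by linarith
  have hmc : ∀ m : ℕ, (0:ℝ) < (m:ℝ)+c := fun m => by positivity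
  have hnn : (0:ℝ) ≤ ((n:ℝ)+c)^s := Real.rpow_nonneg (hmc n).le _
  have hcs : (0:ℝ) ≤ c^s := Real.rpow_nonneg hc0.le _
  rcases le_total s 0 with hs | hs
  · have hmono : ∀ m : ℕ, ((((m+1:ℕ)):ℝ)+c)^s ≤ (((m:ℕ):ℝ)+c)^s := by
      intro m
      apply Real.rpow_le_rpow_of_nonpos (hmc m) (by push_cast; linarith) hs
    obtain ⟨hb1, hb2⟩ := alt_bound hmono (fun m => Real.rpow_nonneg (hmc m).le _) n
    rw [abs_of_nonneg hb1]
    have : (((0:ℕ):ℝ)+c)^s = c^s := by norm_num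
    rw [this] at hb2
    linarith
  · set t : ℕ → ℝ := fun m => ((m:ℝ)+c)^s with htdef
    have htmono : ∀ a b : ℕ, a ≤ b → t a ≤ t b := by
      intro a b hab
      apply Real.rpow_le_rpow (hmc a).le (by exact_mod_cast add_le_add_left (Nat.cast_le.mpr hab) c) hs
    set h : ℕ → ℝ := fun m => t n - t (min m n) with hhdef
    have hmono : ∀ m : ℕ, h (m+1) ≤ h m := by
      intro m
      have := htmono (min m n) (min (m+1) n) (by omega)
      simp only [hhdef]; linarith
    have hpos : ∀ m : ℕ, 0 ≤ h m := by
      intro m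
      have := htmono (min m n) n (by omega)
      simp only [hhdef]; linarith
    obtain ⟨hb1, hb2⟩ := alt_bound hmono hpos n
    have hh0 : h 0 = t n - c^s := by
      simp only [hhdef, htdef, Nat.zero_min, Nat.cast_zero, zero_add]
    have hσ : |∑ m ∈ Finset.range n, (-1:ℝ)^m| ≤ 1 := by
      rw [neg_one_geom_sum]; split_ifs <;> norm_num
    have hsplit : ∑ m ∈ Finset.range n, (-1:ℝ)^m * h m
        = t n * (∑ m ∈ Finset.range n, (-1:ℝ)^m)
          - ∑ m ∈ Finset.range n, (-1:ℝ)^m * t m := by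
      rw [Finset.mul_sum, ← Finset.sum_sub_distrib]
      refine Finset.sum_congr rfl (fun m hm => ?_)
      have : min m n = m := min_eq_left (le_of_lt (Finset.mem_range.mp hm))
      simp only [hhdef, this]; ring
    have htn : |t n * (∑ m ∈ Finset.range n, (-1:ℝ)^m)| ≤ t n := by
      rw [abs_mul, abs_of_nonneg (Real.rpow_nonneg (hmc n).le _)]
      calc t n * |∑ m ∈ Finset.range n, (-1:ℝ)^m| ≤ t n * 1 := by
            apply mul_le_mul_of_nonneg_left hσ (Real.rpow_nonneg (hmc n).le _)
      _ = t n := mul_one _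
    have habs := abs_le.mp htn
    have hB2 : ∑ m ∈ Finset.range n, (-1:ℝ)^m * h m ≤ t n - c^s := hh0 ▸ hb2
    rw [hsplit] at hb1 hB2
    rw [abs_le]
    constructor <;> simp only [htdef] at * <;> nlinarith


lemma ella_nat (α : ℝ) (m : ℕ) : ella α (m:ℤ) = ((m:ℝ) + (2:ℝ)^(1/α))^(-α) := by
  unfold ella
  rw [abs_of_nonneg (Int.natCast_nonneg m)]
  norm_num


/-- for `α ∈ (0,2)`, the mean square displacement
`⟨ΔX²_n⟩ = Σ_{j=-n}^n A_j j²` of the slicer map `S_α` satisfies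
`⟨ΔX²_n⟩/n^γ → ∞` for `0 ≤ γ < 2-α`, `→ 4/(2-α)` for `γ = 2-α`, and `→ 0` for
`2-α < γ ≤ 2`; in particular the transport exponent is `γᵗ = 2-α`. -/
theorem msd_limit (α : ℝ) (hα : α ∈ Set.Ioo (0:ℝ) 2) :
    (∀ γ : ℝ, 0 ≤ γ → γ < 2 - α →
      Tendsto (fun n : ℕ => momentCG α 2 n / (n:ℝ)^γ) atTop atTop) ∧
    Tendsto (fun n : ℕ => momentCG α 2 n / (n:ℝ)^(2-α)) atTop (nhds (4 / (2 - α))) ∧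
    (∀ γ : ℝ, 2 - α < γ → γ ≤ 2 →
      Tendsto (fun n : ℕ => momentCG α 2 n / (n:ℝ)^γ) atTop (nhds 0)) := by
  obtain ⟨hα0, hα2⟩ := hα
  set c : ℝ := (2:ℝ)^(1/α) with hcdef
  have hc1 : 1 ≤ c := by
    rw [hcdef, show (1:ℝ) = (2:ℝ)^(0:ℝ) from (Real.rpow_zero 2).symm]
    exact Real.rpow_le_rpow_of_exponent_le one_le_two (by positivity)
  have hc0 : (0:ℝ) < c := by linarith
  have hmc : ∀ m : ℕ, (0:ℝ) < (m:ℝ)+c := fun m => by positivity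
  set P : ℕ → ℝ := fun n => ∑ m ∈ Finset.range n, ((m:ℝ)+c)^((2-α)-1) with hPdef
  set Q : ℕ → ℝ := fun n => ∑ m ∈ Finset.range n, ((m:ℝ)+c)^(-α) with hQdef
  set D1 : ℕ → ℝ := fun n => ∑ m ∈ Finset.range n, (-1:ℝ)^m * ((m:ℝ)+c)^((2-α)-1) with hD1def
  set D2 : ℕ → ℝ := fun n => ∑ m ∈ Finset.range n, (-1:ℝ)^m * ((m:ℝ)+c)^(-α) with hD2def
  set D : ℕ → ℝ := fun n => ∑ m ∈ Finset.range n, (-1:ℝ)^m * ((m:ℝ)*((m:ℝ)+c)^(-α)) with hDdef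
  set R : ℕ → ℝ := fun n => if n % 2 = 1 then 2 * ella α 0 else 0 with hRdef
  have hFm : ∀ m : ℕ, (m:ℝ)*((m:ℝ)+c)^(-α) = ((m:ℝ)+c)^((2-α)-1) - c*((m:ℝ)+c)^(-α) := by
    intro m
    have h1 : ((m:ℝ)+c)^((2-α)-1) = ((m:ℝ)+c) * ((m:ℝ)+c)^(-α) := by
      rw [show (2-α)-1 = 1 + (-α) by ring, Real.rpow_add (hmc m), Real.rpow_one]
    rw [h1]; ring
  -- moment identity
  have hM : ∀ n : ℕ, momentCG α 2 n = 4*P n - 4*c*Q n - 4*((-1:ℝ)^n * D n) + R n := by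
    intro n
    rw [momentCG_closed α n]
    unfold SsumF
    have hpt : ∀ m ∈ Finset.range n, (if m % 2 ≠ n % 2 then (m:ℝ) * ella α (m:ℤ) else 0)
        = ((m:ℝ)*((m:ℝ)+c)^(-α) - (-1:ℝ)^n * ((-1:ℝ)^m * ((m:ℝ)*((m:ℝ)+c)^(-α))))/2 := by
      intro m _
      rcases Nat.even_or_odd m with hm | hm <;> rcases Nat.even_or_odd n with hn | hn
      · rw [if_neg (by rw [Nat.even_iff] at hm hn; omega), hm.neg_one_pow, hn.neg_one_pow]; ring
      · rw [if_pos (by rw [Nat.even_iff] at hm; rw [Nat.odd_iff] at hn; omega),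
          ella_nat, hm.neg_one_pow, hn.neg_one_pow]; ring
      · rw [if_pos (by rw [Nat.odd_iff] at hm; rw [Nat.even_iff] at hn; omega),
          ella_nat, hm.neg_one_pow, hn.neg_one_pow]; ring
      · rw [if_neg (by rw [Nat.odd_iff] at hm hn; omega), hm.neg_one_pow, hn.neg_one_pow]; ring
    rw [Finset.sum_congr rfl hpt, ← Finset.sum_div, Finset.sum_sub_distrib, ← Finset.mul_sum]
    have hsplit : ∑ m ∈ Finset.range n, (m:ℝ)*((m:ℝ)+c)^(-α) = P n - c * Q n := by
      calc ∑ m ∈ Finset.range n, (m:ℝ)*((m:ℝ)+c)^(-α)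
          = ∑ m ∈ Finset.range n, (((m:ℝ)+c)^((2-α)-1) - c*((m:ℝ)+c)^(-α)) :=
            Finset.sum_congr rfl (fun m _ => hFm m)
      _ = P n - c * Q n := by rw [Finset.sum_sub_distrib, ← Finset.mul_sum]
    have hDn : ∑ m ∈ Finset.range n, (-1:ℝ)^m * ((m:ℝ)*((m:ℝ)+c)^(-α)) = D n := rfl
    have hRn : (if n % 2 = 1 then 2 * ella α 0 else 0) = R n := rfl
    rw [hsplit, hDn, hRn]
    ring
  -- D bound
  have hDb : ∀ n : ℕ, |D n| ≤ (2*((n:ℝ)+c)^((2-α)-1) + 2*c^((2-α)-1))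
      + c * (2*((n:ℝ)+c)^(-α) + 2*c^(-α)) := by
    intro n
    have hDsplit : D n = D1 n - c * D2 n := by
      rw [hDdef, hD1def, hD2def]
      simp only
      rw [Finset.mul_sum, ← Finset.sum_sub_distrib]
      refine Finset.sum_congr rfl (fun m _ => ?_)
      rw [hFm m]; ring
    have h1 : |D1 n| ≤ 2*((n:ℝ)+c)^((2-α)-1) + 2*c^((2-α)-1) :=
      alt_rpow_bound c ((2-α)-1) hc1 (by linarith) n
    have h2 : |D2 n| ≤ 2*((n:ℝ)+c)^(-α) + 2*c^(-α) :=
      alt_rpow_bound c (-α) hc1 (by linarith) n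
    obtain ⟨h1a, h1b⟩ := abs_le.mp h1
    obtain ⟨h2a, h2b⟩ := abs_le.mp h2
    rw [hDsplit, abs_le]
    constructor <;> nlinarith
  -- limits
  have hPT : Tendsto (fun n : ℕ => P n / (n:ℝ)^(2-α)) atTop (nhds (1/(2-α))) :=
    sum_rpow_asymp c (2-α) hc1 (by linarith) (by linarith)
  have hinv : Tendsto (fun n : ℕ => (((n:ℝ)^(2-α))⁻¹)) atTop (nhds 0) :=
    inv_rpow_tendsto (2-α) (by linarith)
  have hQT : Tendsto (fun n : ℕ => Q n / (n:ℝ)^(2-α)) atTop (nhds 0) := by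
    have hb : Tendsto (fun n : ℕ => (2/(1-α/2)) * (((n:ℝ)+c)^(1-α/2) / (n:ℝ)^(2-α)))
        atTop (nhds ((2/(1-α/2)) * 0)) :=
      (rat0 c (1-α/2) (2-α) (by linarith) (by linarith)).const_mul _
    rw [mul_zero] at hb
    refine squeeze_zero' ?_ ?_ hb
    · filter_upwards with n
      have : 0 ≤ Q n := Finset.sum_nonneg (fun m _ => Real.rpow_nonneg (hmc m).le _)
      positivity
    · filter_upwards [eventually_ge_atTop 1] with n hn
      have hn0 : (0:ℝ) < (n:ℝ) := by exact_mod_cast hn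
      have hp : (0:ℝ) < (n:ℝ)^(2-α) := Real.rpow_pos_of_pos hn0 _
      rw [mul_div_assoc'] at *
      have hq1 : Q n ≤ ∑ m ∈ Finset.range n, ((m:ℝ)+c)^(-(α/2)) := by
        refine Finset.sum_le_sum (fun m _ => ?_)
        exact Real.rpow_le_rpow_of_exponent_le (by linarith [hmc m, (Nat.cast_nonneg m : (0:ℝ) ≤ m)]) (by linarith)
      have hq2 := q_sum_bound hc1 (show 0 < α/2 by linarith) (show α/2 < 1 by linarith) n
      have hq3 : Q n ≤ (2/(1-α/2)) * ((n:ℝ)+c)^(1-α/2) := by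
        refine hq1.trans ?_
        calc ∑ m ∈ Finset.range n, ((m:ℝ)+c)^(-(α/2))
            ≤ (2/(1-α/2)) * ((n:ℝ)+c)^(1-(α/2)) := hq2
        _ = (2/(1-α/2)) * ((n:ℝ)+c)^(1-α/2) := by norm_num
      exact div_le_div_of_nonneg_right hq3 hp.le |>.trans_eq (by rw [mul_div_assoc])
  have hDT : Tendsto (fun n : ℕ => ((-1:ℝ)^n * D n) / (n:ℝ)^(2-α)) atTop (nhds 0) := by
    have hb : Tendsto (fun n : ℕ =>
        2*(((n:ℝ)+c)^((2-α)-1)/(n:ℝ)^(2-α)) + (2*c^((2-α)-1))*(((n:ℝ)^(2-α))⁻¹)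
          + (2*c)*(((n:ℝ)+c)^(-α)/(n:ℝ)^(2-α)) + (2*c*c^(-α))*(((n:ℝ)^(2-α))⁻¹))
        atTop (nhds (2*0 + (2*c^((2-α)-1))*0 + (2*c)*0 + (2*c*c^(-α))*0)) := by
      refine (((((rat0 c ((2-α)-1) (2-α) (by linarith) (by linarith)).const_mul 2).add
        (hinv.const_mul _)).add
        ((rat0 c (-α) (2-α) (by linarith) (by linarith)).const_mul _)).add
        (hinv.const_mul _))
    have hzero : (2:ℝ)*0 + (2*c^((2-α)-1))*0 + (2*c)*0 + (2*c*c^(-α))*0 = 0 := by ring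
    rw [hzero] at hb
    rw [tendsto_zero_iff_abs_tendsto_zero]
    refine squeeze_zero' (Eventually.of_forall (fun n => abs_nonneg _)) ?_ hb
    filter_upwards [eventually_ge_atTop 1] with n hn
    have hn0 : (0:ℝ) < (n:ℝ) := by exact_mod_cast hn
    have hp : (0:ℝ) < (n:ℝ)^(2-α) := Real.rpow_pos_of_pos hn0 _
    simp only [Function.comp_apply]
    rw [abs_div, abs_of_pos hp, abs_mul, abs_pow, abs_neg, abs_one, one_pow, one_mul]
    have h1 := hDb n
    have h2 : |D n| / (n:ℝ)^(2-α)
        ≤ ((2*((n:ℝ)+c)^((2-α)-1) + 2*c^((2-α)-1)) + c * (2*((n:ℝ)+c)^(-α) + 2*c^(-α)))/(n:ℝ)^(2-α) :=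
      div_le_div_of_nonneg_right h1 hp.le
    refine h2.trans_eq ?_
    simp only [div_eq_mul_inv]
    ring
  have hRT : Tendsto (fun n : ℕ => R n / (n:ℝ)^(2-α)) atTop (nhds 0) := by
    have hel : (0:ℝ) ≤ ella α 0 := by
      unfold ella
      positivity
    have hb : Tendsto (fun n : ℕ => (2*ella α 0)*(((n:ℝ)^(2-α))⁻¹)) atTop (nhds ((2*ella α 0)*0)) :=
      hinv.const_mul _
    rw [mul_zero] at hb
    rw [tendsto_zero_iff_abs_tendsto_zero]
    refine squeeze_zero' (Eventually.of_forall (fun n => abs_nonneg _)) ?_ hb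
    filter_upwards [eventually_ge_atTop 1] with n hn
    have hn0 : (0:ℝ) < (n:ℝ) := by exact_mod_cast hn
    have hp : (0:ℝ) < (n:ℝ)^(2-α) := Real.rpow_pos_of_pos hn0 _
    simp only [Function.comp_apply]
    rw [abs_div, abs_of_pos hp, div_eq_mul_inv]
    have hRb : |R n| ≤ 2*ella α 0 := by
      simp only [hRdef]
      split_ifs
      · rw [abs_of_nonneg (by linarith)]
      · rw [abs_zero]; linarith
    exact mul_le_mul_of_nonneg_right hRb (by positivity)
  have H : Tendsto (fun n : ℕ => momentCG α 2 n / (n:ℝ)^(2-α)) atTop (nhds (4/(2-α))) := by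
    have h0 := (((hPT.sub (hQT.const_mul c)).const_mul 4).sub (hDT.const_mul 4)).add hRT
    have hval : (4:ℝ)*((1/(2-α)) - c*0) - 4*0 + 0 = 4/(2-α) := by
      rw [mul_zero, sub_zero, mul_zero, sub_zero, add_zero, mul_one_div]
    rw [hval] at h0
    refine Tendsto.congr (fun n => ?_) h0
    rw [hM n]
    simp only [div_eq_mul_inv]
    ring
  have hL : (0:ℝ) < 4/(2-α) := by
    have : (0:ℝ) < 2-α := by linarith
    positivity
  refine ⟨?_, H, ?_⟩
  · intro γ hγ0 hγlt
    have hpow : Tendsto (fun n : ℕ => (n:ℝ)^((2-α)-γ)) atTop atTop :=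
      (tendsto_rpow_atTop (by linarith)).comp tendsto_natCast_atTop_atTop
    have h1 := Filter.Tendsto.pos_mul_atTop hL H hpow
    refine h1.congr' ?_
    filter_upwards [eventually_ge_atTop 1] with n hn
    have hn0 : (0:ℝ) < (n:ℝ) := by exact_mod_cast hn
    have hne1 : (n:ℝ)^(2-α) ≠ 0 := ne_of_gt (Real.rpow_pos_of_pos hn0 _)
    have hne2 : (n:ℝ)^γ ≠ 0 := ne_of_gt (Real.rpow_pos_of_pos hn0 _)
    rw [show (n:ℝ)^((2-α)-γ) = (n:ℝ)^(2-α)/(n:ℝ)^γ from Real.rpow_sub hn0 _ _]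
    field_simp
  · intro γ hγgt hγ2
    have hpow : Tendsto (fun n : ℕ => (n:ℝ)^((2-α)-γ)) atTop (nhds 0) := by
      rw [show (2-α)-γ = -(γ-(2-α)) by ring]
      exact (tendsto_rpow_neg_atTop (by linarith)).comp tendsto_natCast_atTop_atTop
    have h1 := H.mul hpow
    rw [mul_zero] at h1
    refine h1.congr' ?_
    filter_upwards [eventually_ge_atTop 1] with n hn
    have hn0 : (0:ℝ) < (n:ℝ) := by exact_mod_cast hn
    have hne1 : (n:ℝ)^(2-α) ≠ 0 := ne_of_gt (Real.rpow_pos_of_pos hn0 _)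
    have hne2 : (n:ℝ)^γ ≠ 0 := ne_of_gt (Real.rpow_pos_of_pos hn0 _)
    rw [show (n:ℝ)^((2-α)-γ) = (n:ℝ)^(2-α)/(n:ℝ)^γ from Real.rpow_sub hn0 _ _]
    field_simp
end

section
/- For α ∈ (0,2] and even p > 2, the p-th moment of the slicer map, ⟨ΔX^p_n⟩ = Σ_{j=−n}^n A_j j^p, satisfies lim_{n→∞} ⟨ΔX^p_n⟩/n^γ = +∞ if 0 ≤ γ < p−α, = 2p/(p−α) if γ = p−α, and = 0 if γ > p−α; in particular ⟨ΔX^p_n⟩ ∼ n^{p−α}. -/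
open Filter Finset Topology


section helpers

lemma tendsto_even_odd {X : Type*} {f : ℕ → X} {l : Filter X}
    (he : Tendsto (fun K => f (2*K)) atTop l) (ho : Tendsto (fun K => f (2*K+1)) atTop l) :
    Tendsto f atTop l := by
  intro s hs
  rw [Filter.mem_map, mem_atTop_sets]
  obtain ⟨N₁, hN₁⟩ := mem_atTop_sets.1 (mem_map.1 (he hs))
  obtain ⟨N₂, hN₂⟩ := mem_atTop_sets.1 (mem_map.1 (ho hs))
  refine ⟨2*(N₁+N₂)+2, fun n hn => ?_⟩
  rcases Nat.even_or_odd n with ⟨q,hq⟩|⟨q,hq⟩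
  · have h1 : n = 2*q := by omega
    have h2 : N₁ ≤ q := by omega
    have := hN₁ q h2; rwa [h1]
  · have h1 : n = 2*q+1 := by omega
    have h2 : N₂ ≤ q := by omega
    have := hN₂ q h2; rwa [h1]

lemma sum_rpow_le (β : ℝ) (hβ : 0 < β) (K : ℕ) :
    (β+1) * ∑ k ∈ range K, (k:ℝ)^β ≤ (K:ℝ)^(β+1) := by
  have key : ∀ k : ℕ, (β+1) * (k:ℝ)^β ≤ ((k:ℝ)+1)^(β+1) - (k:ℝ)^(β+1) := by
    intro k
    have h1 : ∫ x in (k:ℝ)..((k:ℝ)+1), (k:ℝ)^β ≤ ∫ x in (k:ℝ)..((k:ℝ)+1), x^β := by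
      apply intervalIntegral.integral_mono_on (by linarith) intervalIntegrable_const
      · exact intervalIntegral.intervalIntegrable_rpow (Or.inl hβ.le)
      · intro x hx
        exact Real.rpow_le_rpow (Nat.cast_nonneg k) hx.1 hβ.le
    rw [intervalIntegral.integral_const, integral_rpow (Or.inl (by linarith))] at h1
    have hb1 : β + 1 ≠ 0 := by linarith
    have : (β+1) * (k:ℝ)^β ≤ (β+1) * ((((k:ℝ)+1) ^ (β + 1) - (k:ℝ) ^ (β + 1)) / (β + 1)) := by
      have : ((k:ℝ)+1 - k) • (k:ℝ)^β = (k:ℝ)^β := by simp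
      rw [this] at h1
      nlinarith [h1]
    rwa [mul_div_cancel₀ _ hb1] at this
  calc (β+1) * ∑ k ∈ range K, (k:ℝ)^β = ∑ k ∈ range K, (β+1) * (k:ℝ)^β := by rw [mul_sum]
    _ ≤ ∑ k ∈ range K, (((k:ℝ)+1)^(β+1) - (k:ℝ)^(β+1)) := sum_le_sum (fun k _ => key k)
    _ = (K:ℝ)^(β+1) := by
        have := Finset.sum_range_sub (fun k : ℕ => ((k:ℝ))^(β+1)) K
        push_cast at this
        rw [this, Real.zero_rpow (by positivity)]; ring

lemma le_sum_rpow (β : ℝ) (hβ : 0 < β) (K : ℕ) :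
    (K:ℝ)^(β+1) ≤ (β+1) * (∑ k ∈ range K, (k:ℝ)^β + (K:ℝ)^β) := by
  have key : ∀ k : ℕ, ((k:ℝ)+1)^(β+1) - (k:ℝ)^(β+1) ≤ (β+1) * ((k:ℝ)+1)^β := by
    intro k
    have h1 : ∫ x in (k:ℝ)..((k:ℝ)+1), x^β ≤ ∫ x in (k:ℝ)..((k:ℝ)+1), ((k:ℝ)+1)^β := by
      apply intervalIntegral.integral_mono_on (by linarith)
      · exact intervalIntegral.intervalIntegrable_rpow (Or.inl hβ.le)
      · exact intervalIntegrable_const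
      · intro x hx
        exact Real.rpow_le_rpow (le_trans (Nat.cast_nonneg k) hx.1) hx.2 hβ.le
    rw [intervalIntegral.integral_const, integral_rpow (Or.inl (by linarith))] at h1
    have hb1 : (0:ℝ) < β + 1 := by linarith
    have h2 : ((k:ℝ)+1 - k) • ((k:ℝ)+1)^β = ((k:ℝ)+1)^β := by simp
    rw [h2] at h1
    rw [div_le_iff₀ hb1] at h1
    linarith
  have tele : ∑ k ∈ range K, (((k:ℝ)+1)^(β+1) - (k:ℝ)^(β+1)) = (K:ℝ)^(β+1) := by
    have := Finset.sum_range_sub (fun k : ℕ => ((k:ℝ))^(β+1)) K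
    push_cast at this
    rw [this, Real.zero_rpow (by positivity)]; ring
  have shift : ∑ k ∈ range K, ((k:ℝ)+1)^β = ∑ k ∈ range K, (k:ℝ)^β + (K:ℝ)^β - (0:ℝ)^β := by
    have := Finset.sum_range_succ' (fun k : ℕ => ((k:ℝ))^β) K
    rw [Finset.sum_range_succ] at this
    push_cast at this
    linarith [this]
  calc (K:ℝ)^(β+1) = ∑ k ∈ range K, (((k:ℝ)+1)^(β+1) - (k:ℝ)^(β+1)) := tele.symm
    _ ≤ ∑ k ∈ range K, (β+1) * ((k:ℝ)+1)^β := sum_le_sum (fun k _ => key k)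
    _ = (β+1) * (∑ k ∈ range K, (k:ℝ)^β + (K:ℝ)^β - (0:ℝ)^β) := by rw [← mul_sum, shift]
    _ = (β+1) * (∑ k ∈ range K, (k:ℝ)^β + (K:ℝ)^β) := by rw [Real.zero_rpow (by linarith)]; ring

lemma riemann_lim (β : ℝ) (hβ : 0 < β) :
    Tendsto (fun K : ℕ => (∑ k ∈ range K, (k:ℝ)^β) / (K:ℝ)^(β+1)) atTop (𝓝 (1/(β+1))) := by
  have hb1 : (0:ℝ) < β + 1 := by linarith
  have lower : ∀ᶠ K : ℕ in atTop, 1/(β+1) - ((K:ℝ))⁻¹ ≤ (∑ k ∈ range K, (k:ℝ)^β) / (K:ℝ)^(β+1) := by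
    filter_upwards [eventually_ge_atTop 1] with K hK
    have hKpos : (0:ℝ) < K := by exact_mod_cast hK
    have hKp : (0:ℝ) < (K:ℝ)^(β+1) := Real.rpow_pos_of_pos hKpos _
    have hKb : (K:ℝ)^(β+1) = (K:ℝ)^β * K := by
      rw [Real.rpow_add hKpos, Real.rpow_one]
    have h := le_sum_rpow β hβ K
    rw [le_div_iff₀ hKp]
    have e1 : (1/(β+1) - (K:ℝ)⁻¹) * (K:ℝ)^(β+1) = (K:ℝ)^(β+1)/(β+1) - (K:ℝ)^β := by
      rw [hKb]; field_simp
    rw [e1, sub_le_iff_le_add, div_le_iff₀ hb1]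
    linarith
  have upper : ∀ᶠ K : ℕ in atTop, (∑ k ∈ range K, (k:ℝ)^β) / (K:ℝ)^(β+1) ≤ 1/(β+1) := by
    filter_upwards [eventually_ge_atTop 1] with K hK
    have hKpos : (0:ℝ) < K := by exact_mod_cast hK
    have hKp : (0:ℝ) < (K:ℝ)^(β+1) := Real.rpow_pos_of_pos hKpos _
    rw [div_le_div_iff₀ hKp hb1]
    have := sum_rpow_le β hβ K
    nlinarith
  have hlim : Tendsto (fun K : ℕ => 1/(β+1) - ((K:ℝ))⁻¹) atTop (𝓝 (1/(β+1))) := by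
    have : Tendsto (fun K : ℕ => ((K:ℝ))⁻¹) atTop (𝓝 0) := tendsto_inv_atTop_zero.comp tendsto_natCast_atTop_atTop
    simpa using tendsto_const_nhds.sub this
  exact tendsto_of_tendsto_of_tendsto_of_le_of_le' hlim tendsto_const_nhds lower upper

lemma sum_rpow_atTop (β : ℝ) (hβ : 0 < β) :
    Tendsto (fun K : ℕ => ∑ k ∈ range K, (k:ℝ)^β) atTop atTop := by
  have hf : Tendsto (fun K : ℕ => (K:ℝ) - 1) atTop atTop := by
    simpa [sub_eq_add_neg] using tendsto_atTop_add_const_right atTop (-1 : ℝ) tendsto_natCast_atTop_atTop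
  apply tendsto_atTop_mono' atTop _ hf
  filter_upwards [eventually_ge_atTop 1] with K hK
  have : (K:ℝ) - 1 = ∑ k ∈ Ico 1 K, (1:ℝ) := by
    rw [Finset.sum_const, Nat.card_Ico, nsmul_eq_mul, mul_one, Nat.cast_sub hK, Nat.cast_one]
  rw [this]
  have h1 : ∑ k ∈ Ico 1 K, (1:ℝ) ≤ ∑ k ∈ Ico 1 K, (k:ℝ)^β := by
    apply sum_le_sum
    intro k hk
    have hk1 : (1:ℝ) ≤ (k:ℝ) := by exact_mod_cast (Finset.mem_Ico.1 hk).1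
    calc (1:ℝ) = 1^β := (Real.one_rpow β).symm
      _ ≤ (k:ℝ)^β := Real.rpow_le_rpow zero_le_one hk1 hβ.le
  refine le_trans h1 (Finset.sum_le_sum_of_subset_of_nonneg ?_ ?_)
  · rw [Finset.range_eq_Ico]; exact Finset.Ico_subset_Ico (by omega) le_rfl
  · intro k _ _; positivity

lemma weighted_cesaro {b : ℕ → ℝ} {β c : ℝ} (hβ : 0 < β)
    (h : Tendsto (fun k : ℕ => b k / (k:ℝ)^β) atTop (𝓝 c)) :
    Tendsto (fun K : ℕ => (∑ k ∈ range K, b k) / (K:ℝ)^(β+1)) atTop (𝓝 (c/(β+1))) := by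
  set e : ℕ → ℝ := fun k => b k - c * (k:ℝ)^β with he
  have hlo : (fun k => e k) =o[atTop] (fun k : ℕ => (k:ℝ)^β) := by
    have hg : ∀ᶠ k : ℕ in atTop, (k:ℝ)^β = 0 → e k = 0 := by
      filter_upwards [eventually_ge_atTop 1] with k hk hc
      have hkp : (0:ℝ) < (k:ℝ)^β := Real.rpow_pos_of_pos (by exact_mod_cast hk) _
      exact absurd hc hkp.ne'
    rw [Asymptotics.isLittleO_iff_tendsto' hg]
    apply Tendsto.congr' _ (by simpa using h.sub_const c)
    filter_upwards [eventually_ge_atTop 1] with k hk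
    have hkp : (0:ℝ) < (k:ℝ)^β := Real.rpow_pos_of_pos (by exact_mod_cast hk) _
    field_simp [he]
    ring
  have hsum := hlo.sum_range (fun i => by positivity) (sum_rpow_atTop β hβ)
  have hz : Tendsto (fun K : ℕ => (∑ k ∈ range K, e k) / (K:ℝ)^(β+1)) atTop (𝓝 0) := by
    have h1 := hsum.tendsto_div_nhds_zero
    have h2 := (h1.mul (riemann_lim β hβ))
    rw [zero_mul] at h2
    apply Tendsto.congr' _ h2
    filter_upwards [eventually_ge_atTop 2] with K hK
    have hs : (0:ℝ) < ∑ k ∈ range K, (k:ℝ)^β := by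
      have : (1:ℝ) ≤ ∑ k ∈ range K, (k:ℝ)^β := by
        have h1K : 1 ∈ range K := Finset.mem_range.2 (by omega)
        have : ((1:ℕ):ℝ)^β ≤ ∑ k ∈ range K, (k:ℝ)^β :=
          Finset.single_le_sum (f := fun k : ℕ => (k:ℝ)^β) (fun k _ => by positivity) h1K
        simpa using this
      linarith
    have hKp : (0:ℝ) < (K:ℝ)^(β+1) := Real.rpow_pos_of_pos (by exact_mod_cast Nat.lt_of_lt_of_le Nat.zero_lt_two hK : (0:ℝ) < K) _
    field_simp
  have hmain : Tendsto (fun K : ℕ => (c * ∑ k ∈ range K, (k:ℝ)^β) / (K:ℝ)^(β+1)) atTop (𝓝 (c/(β+1))) := by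
    have := (riemann_lim β hβ).const_mul c
    apply Tendsto.congr' _ (by simpa [mul_one_div, ← div_eq_mul_inv] using this)
    filter_upwards with K
    ring
  have := hmain.add hz
  rw [add_zero] at this
  apply Tendsto.congr' _ this
  filter_upwards with K
  rw [← add_div, Finset.mul_sum, ← Finset.sum_add_distrib]
  congr 1
  apply Finset.sum_congr rfl
  intro k _
  simp only [he]; ring

lemma lim_ratio (a d : ℝ) (ha : 0 < a) : Tendsto (fun k : ℕ => (a*(k:ℝ)+d)/(k:ℝ)) atTop (𝓝 a) := by
  have hinv : Tendsto (fun k : ℕ => ((k:ℝ))⁻¹) atTop (𝓝 0) :=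
    tendsto_inv_atTop_zero.comp tendsto_natCast_atTop_atTop
  have h1 : Tendsto (fun k : ℕ => a + d * ((k:ℝ))⁻¹) atTop (𝓝 (a + d * 0)) :=
    tendsto_const_nhds.add (hinv.const_mul d)
  rw [mul_zero, add_zero] at h1
  apply Tendsto.congr' _ h1
  filter_upwards [eventually_ge_atTop 1] with k hk
  have hk0 : (0:ℝ) < k := by exact_mod_cast hk
  field_simp

lemma lim_ell (α : ℝ) (d : ℝ) :
    Tendsto (fun k : ℕ => (2*(k:ℝ)+d)^(-α) * (k:ℝ)^α) atTop (𝓝 ((2:ℝ)^(-α))) := by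
  have h0 := (lim_ratio 2 d two_pos).rpow_const (p := -α) (Or.inl two_ne_zero)
  apply Tendsto.congr' _ h0
  filter_upwards [eventually_ge_atTop (⌈|d|⌉₊ + 1)] with k hk
  have hk1 : (1:ℝ) ≤ (k:ℝ) := by
    have : 1 ≤ k := le_trans (by omega) hk
    exact_mod_cast this
  have hd : |d| ≤ (k:ℝ) := by
    calc |d| ≤ ⌈|d|⌉₊ := Nat.le_ceil _
      _ ≤ (k:ℝ) := by exact_mod_cast le_trans (by omega) hk
  have hnum : (0:ℝ) ≤ 2*(k:ℝ)+d := by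
    have := neg_abs_le d
    linarith
  rw [Real.div_rpow hnum (by linarith), Real.rpow_neg (by linarith : (0:ℝ) ≤ (k:ℝ)), div_eq_mul_inv, inv_inv]

lemma lim_gpart (p : ℕ) (hp : 1 ≤ p) (e : ℝ) :
    Tendsto (fun k : ℕ => ((2*(k:ℝ)+e+2)^p - (2*(k:ℝ)+e)^p)/(k:ℝ)^(p-1)) atTop
      (𝓝 ((p:ℝ) * 2^p)) := by
  have ha : Tendsto (fun k : ℕ => (2*(k:ℝ)+(e+2))/(k:ℝ)) atTop (𝓝 2) := lim_ratio 2 (e+2) two_pos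
  have hb : Tendsto (fun k : ℕ => (2*(k:ℝ)+e)/(k:ℝ)) atTop (𝓝 2) := lim_ratio 2 e two_pos
  have hterm : ∀ i ∈ range p, Tendsto
      (fun k : ℕ => ((2*(k:ℝ)+(e+2))/(k:ℝ))^i * ((2*(k:ℝ)+e)/(k:ℝ))^(p-1-i)) atTop
      (𝓝 ((2:ℝ)^i * 2^(p-1-i))) := fun i _ => (ha.pow i).mul (hb.pow (p-1-i))
  have hsum := tendsto_finset_sum (range p) hterm
  have hval : ∑ i ∈ range p, (2:ℝ)^i * 2^(p-1-i) = (p:ℝ) * 2^(p-1) := by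
    rw [Finset.sum_congr rfl (fun i hi => ?_), Finset.sum_const, card_range, nsmul_eq_mul]
    rw [← pow_add]
    congr 1
    have := Finset.mem_range.1 hi
    omega
  rw [hval] at hsum
  have h2 := hsum.const_mul 2
  have hc : 2 * ((p:ℝ) * 2^(p-1)) = (p:ℝ) * 2^p := by
    rw [show (2:ℝ)^p = 2^(p-1)*2 by rw [← pow_succ]; congr 1; omega]
    ring
  rw [hc] at h2
  apply Tendsto.congr' _ h2
  filter_upwards [eventually_ge_atTop 1] with k hk
  have hk0 : ((k:ℝ)) ≠ 0 := by positivity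
  set a := 2*(k:ℝ)+(e+2) with hadef
  set b := 2*(k:ℝ)+e with hbdef
  have hgeom := geom_sum₂_mul a b p
  have hab : a - b = 2 := by rw [hadef, hbdef]; ring
  rw [hab] at hgeom
  have e2 : 2*(k:ℝ)+e+2 = a := by rw [hadef]; ring
  rw [e2, ← hgeom, mul_comm _ (2:ℝ), mul_div_assoc, Finset.sum_div]
  congr 1
  apply Finset.sum_congr rfl
  intro i hi
  rw [div_pow, div_pow, div_mul_div_comm, ← pow_add]
  congr 2
  have := Finset.mem_range.1 hi
  omega

lemma lim_coeff (α : ℝ) (hα0 : 0 < α) (p : ℕ) (hp2 : 2 < p) (r : ℕ) :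
    Tendsto (fun k : ℕ => (2 * ella α ((2*k+1+r : ℕ):ℤ) * ((2*(k:ℝ)+r+2)^p - (2*(k:ℝ)+r)^p))
        / (k:ℝ)^((p:ℝ)-1-α)) atTop (𝓝 ((2*(2:ℝ)^(-α)) * ((p:ℝ)*2^p))) := by
  set d : ℝ := (1:ℝ) + r + 2^(1/α) with hd
  have hell : ∀ k : ℕ, ella α ((2*k+1+r : ℕ):ℤ) = (2*(k:ℝ)+d)^(-α) := by
    intro k
    unfold ella
    rw [abs_of_nonneg (by positivity)]
    congr 1
    push_cast
    ring
  have hl := ((lim_ell α d).const_mul 2).mul (lim_gpart p (by omega) (r:ℝ))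
  apply Tendsto.congr' _ hl
  filter_upwards [eventually_ge_atTop 1] with k hk
  have hk0 : (0:ℝ) < k := by exact_mod_cast hk
  rw [hell k]
  have hkβ : (k:ℝ)^((p:ℝ)-1-α) = (k:ℝ)^(p-1) * ((k:ℝ)^α)⁻¹ := by
    rw [show (p:ℝ)-1-α = ((p-1:ℕ):ℝ) + (-α) by push_cast [Nat.cast_sub (by omega : 1 ≤ p)]; ring,
      Real.rpow_add hk0, Real.rpow_natCast, Real.rpow_neg hk0.le]
  rw [hkβ]
  have h1 : (0:ℝ) < (k:ℝ)^α := Real.rpow_pos_of_pos hk0 _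
  have h2 : (0:ℝ) < (k:ℝ)^(p-1) := by positivity
  field_simp

lemma tendsto_shift {β L : ℝ} (hβ : 0 ≤ β) (a bb : ℝ) (ha : 0 < a) (hb : 0 ≤ bb) {u : ℕ → ℝ}
    (hs : Tendsto (fun K : ℕ => u K/(K:ℝ)^β) atTop (𝓝 L)) :
    Tendsto (fun K : ℕ => u K / (a*(K:ℝ)+bb)^β) atTop (𝓝 (L * (a⁻¹)^β)) := by
  have hr : Tendsto (fun K : ℕ => (K:ℝ)/(a*(K:ℝ)+bb)) atTop (𝓝 a⁻¹) := by
    have h0 := (lim_ratio a bb ha).inv₀ ha.ne'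
    apply Tendsto.congr' _ h0
    filter_upwards [eventually_ge_atTop 1] with k hk
    rw [inv_div]
  have h2 := hr.rpow_const (p := β) (Or.inr hβ)
  have h3 := hs.mul h2
  apply Tendsto.congr' _ h3
  filter_upwards [eventually_ge_atTop 1] with K hK
  have hK0 : (0:ℝ) < K := by exact_mod_cast hK
  have hden : (0:ℝ) < a*(K:ℝ)+bb := by nlinarith
  rw [Real.div_rpow hK0.le hden.le]
  have hKβ : (0:ℝ) < (K:ℝ)^β := Real.rpow_pos_of_pos hK0 _
  have hdβ : (0:ℝ) < (a*(K:ℝ)+bb)^β := Real.rpow_pos_of_pos hden _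
  field_simp

lemma even_two_iff (n : ℕ) : Even (n+2) ↔ Even n := by simp [Nat.even_add]

lemma Acg_eq_of_lt (α : ℝ) (n : ℕ) (j : ℤ) (h : |j| < (n:ℤ)) :
    Acg α (n+2) j = Acg α n j := by
  unfold Acg
  have h1 : ¬ (|j| = ((n+2:ℕ):ℤ)) := by push_cast; omega
  have h2 : ¬ (|j| = (n:ℤ)) := by omega
  rw [if_neg h1, if_neg h2]
  have h3 : (j = 0 ∧ Even (n+2)) ↔ (j = 0 ∧ Even n) := by
    rw [even_two_iff]
  by_cases hc : j = 0 ∧ Even n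
  · rw [if_pos (h3.2 hc), if_pos hc]
  · rw [if_neg (fun hh => hc (h3.1 hh)), if_neg hc]
    have h4 : (0 < |j| ∧ |j| < ((n+2:ℕ):ℤ) ∧ j % 2 = ((n+2:ℕ):ℤ) % 2)
        ↔ (0 < |j| ∧ |j| < (n:ℤ) ∧ j % 2 = (n:ℤ) % 2) := by
      push_cast
      constructor <;> rintro ⟨a, b, c⟩ <;> exact ⟨a, by omega, by omega⟩
    by_cases hc2 : 0 < |j| ∧ |j| < (n:ℤ) ∧ j % 2 = (n:ℤ) % 2
    · rw [if_pos (h4.2 hc2), if_pos hc2]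
    · rw [if_neg (fun hh => hc2 (h4.1 hh)), if_neg hc2]

lemma Acg_big (α : ℝ) (n : ℕ) (j : ℤ) (h : (n:ℤ) < |j|) : Acg α n j = 0 := by
  unfold Acg
  rw [if_neg (by omega), if_neg (by rintro ⟨h0, _⟩; rw [h0, abs_zero] at h; omega),
    if_neg (by rintro ⟨_, h1, _⟩; omega)]

lemma Acg_bd (α : ℝ) (n : ℕ) : Acg α n (n:ℤ) = ella α ((n:ℤ)-1) := by
  unfold Acg
  rw [if_pos (by rw [abs_of_nonneg (by positivity)])]

lemma Acg_bd' (α : ℝ) (n : ℕ) : Acg α n (-(n:ℤ)) = ella α ((n:ℤ)-1) := by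
  unfold Acg
  rw [if_pos (by rw [abs_neg, abs_of_nonneg (by positivity)])]

lemma Acg_mid (α : ℝ) (n : ℕ) (hn : 0 < n) :
    Acg α (n+2) ((n:ℤ)) = ella α ((n:ℤ)-1) - ella α ((n:ℤ)+1) := by
  unfold Acg
  have ha : |(n:ℤ)| = (n:ℤ) := abs_of_nonneg (by positivity)
  rw [if_neg (by push_cast; omega), if_neg (by rintro ⟨h0, _⟩; omega),
    if_pos (by push_cast; refine ⟨by omega, by omega, by omega⟩)]
  rw [ha]

lemma Acg_mid' (α : ℝ) (n : ℕ) (hn : 0 < n) :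
    Acg α (n+2) (-(n:ℤ)) = ella α ((n:ℤ)-1) - ella α ((n:ℤ)+1) := by
  unfold Acg
  have ha : |(-(n:ℤ))| = (n:ℤ) := by rw [abs_neg, abs_of_nonneg (by positivity)]
  rw [if_neg (by push_cast; omega), if_neg (by rintro ⟨h0, _⟩; omega),
    if_pos (by rw [ha]; push_cast; refine ⟨by omega, by omega, by omega⟩)]
  rw [ha]

lemma Acg_skip (α : ℝ) (n : ℕ) (j : ℤ) (h : |j| = (n:ℤ)+1) : Acg α (n+2) j = 0 := by
  unfold Acg
  rw [if_neg (by push_cast; omega), if_neg (by rintro ⟨h0, _⟩; rw [h0] at h; simp at h; omega),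
    if_neg ?_]
  rintro ⟨_, _, hpar⟩
  rcases abs_cases j with ⟨he, _⟩ | ⟨he, _⟩ <;> rw [he] at h <;> push_cast at hpar <;> omega

lemma moment_zero (α : ℝ) (p : ℕ) (hp : 0 < p) : momentCG α p 0 = 0 := by
  unfold momentCG
  have : Finset.Icc (-(0:ℕ):ℤ) ((0:ℕ):ℤ) = {0} := by decide
  rw [this, Finset.sum_singleton]
  rw [show ((0:ℤ):ℝ) = 0 by norm_num, zero_pow hp.ne', mul_zero]

lemma moment_one (α : ℝ) (p : ℕ) (hp : 0 < p) (hpe : Even p) :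
    momentCG α p 1 = 2 * ella α 0 := by
  unfold momentCG
  have : Finset.Icc (-(1:ℕ):ℤ) ((1:ℕ):ℤ) = {-1, 0, 1} := by decide
  rw [this]
  rw [show ({-1, 0, 1} : Finset ℤ) = insert (-1) (insert 0 ({1} : Finset ℤ)) from rfl]
  rw [Finset.sum_insert (by decide), Finset.sum_insert (by decide), Finset.sum_singleton]
  have h1 : Acg α 1 (-1) = ella α 0 := by
    unfold Acg
    rw [if_pos (by decide)]
    norm_num
  have h2 : Acg α 1 1 = ella α 0 := by
    unfold Acg
    rw [if_pos (by decide)]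
    norm_num
  rw [h1, h2]
  rw [show ((0:ℤ):ℝ) = 0 by norm_num, zero_pow hp.ne']
  rw [show ((-1:ℤ):ℝ) = -1 from by norm_num, show ((1:ℤ):ℝ) = 1 from by norm_num]
  rw [hpe.neg_pow, one_pow]
  ring

lemma moment_rec (α : ℝ) (p : ℕ) (hp : 0 < p) (hpe : Even p) (n : ℕ) :
    momentCG α p (n+2) = momentCG α p n
      + 2 * ella α ((n:ℤ)+1) * (((n:ℝ)+2)^p - (n:ℝ)^p) := by
  have habs_cast : ∀ j : ℤ, ((n+2:ℕ):ℤ) = (n:ℤ)+2 := fun _ => by push_cast; ring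
  set S := Finset.Icc (-((n+2:ℕ):ℤ)) ((n+2:ℕ):ℤ) with hS
  have hT : Finset.Icc (-(n:ℤ)) (n:ℤ) ⊆ S := by
    intro j hj
    simp only [hS, Finset.mem_Icc] at *
    push_cast
    omega
  have hm1 : momentCG α p n = ∑ j ∈ S, Acg α n j * (j:ℝ)^p := by
    unfold momentCG
    apply Finset.sum_subset hT
    intro j hj hj2
    simp only [Finset.mem_Icc] at hj2
    have habs : (n:ℤ) < |j| := by
      rcases abs_cases j with ⟨he, _⟩ | ⟨he, _⟩ <;> omega
    have hz : Acg α n j = 0 := by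
      unfold Acg
      rw [if_neg (by omega), if_neg (by rintro ⟨h0, _⟩; rw [h0] at habs; omega),
        if_neg (by rintro ⟨_, h1, _⟩; omega)]
    rw [hz, zero_mul]
  have key : momentCG α p (n+2) - momentCG α p n
      = 2 * ella α ((n:ℤ)+1) * (((n:ℝ)+2)^p - (n:ℝ)^p) := by
    rw [hm1]
    unfold momentCG
    rw [← hS, ← Finset.sum_sub_distrib]
    have hpt : ∀ j ∈ S, Acg α (n+2) j * (j:ℝ)^p - Acg α n j * (j:ℝ)^p
        = (Acg α (n+2) j - Acg α n j) * (j:ℝ)^p := fun j _ => by ring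
    rw [Finset.sum_congr rfl hpt]
    rcases n with _ | m
    · -- n = 0
      have hS0 : S = ({-2, -1, 0, 1, 2} : Finset ℤ) := by
        rw [hS]; decide
      rw [hS0]
      rw [show ({-2, -1, 0, 1, 2} : Finset ℤ)
        = insert (-2) (insert (-1) (insert 0 (insert 1 ({2} : Finset ℤ)))) from rfl]
      rw [Finset.sum_insert (by decide), Finset.sum_insert (by decide),
        Finset.sum_insert (by decide), Finset.sum_insert (by decide), Finset.sum_singleton]
      have v1 : Acg α 2 (-2) = ella α 1 := by
        have := Acg_bd' α 2
        norm_num at this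
        convert this using 2
      have v2 : Acg α 2 2 = ella α 1 := by
        have := Acg_bd α 2
        norm_num at this
        convert this using 2
      have v3 : Acg α 2 (-1) = 0 := by
        have := Acg_skip α 0 (-1) (by norm_num)
        norm_num at this
        convert this using 2
      have v4 : Acg α 2 1 = 0 := by
        have := Acg_skip α 0 1 (by norm_num)
        norm_num at this
        convert this using 2
      have w1 : Acg α 0 (-2) = 0 := Acg_big α 0 (-2) (by norm_num)
      have w2 : Acg α 0 2 = 0 := Acg_big α 0 2 (by norm_num)
      have w3 : Acg α 0 (-1) = 0 := Acg_big α 0 (-1) (by norm_num)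
      have w4 : Acg α 0 1 = 0 := Acg_big α 0 1 (by norm_num)
      norm_num [v1, v2, v3, v4, w1, w2, w3, w4, hpe.neg_pow, zero_pow hp.ne']
      ring
    · -- n = m+1
      set N : ℕ := m+1 with hNdef
      have hNpos : 0 < N := Nat.succ_pos m
      have hsub : ({-((N:ℤ)+2), -(N:ℤ), (N:ℤ), (N:ℤ)+2} : Finset ℤ) ⊆ S := by
        intro j hj
        simp only [Finset.mem_insert, Finset.mem_singleton] at hj
        simp only [hS, Finset.mem_Icc]
        push_cast
        rcases hj with h|h|h|h <;> subst h <;> constructor <;> omega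
      have hvanish : ∀ j ∈ S, j ∉ ({-((N:ℤ)+2), -(N:ℤ), (N:ℤ), (N:ℤ)+2} : Finset ℤ) →
          (Acg α (N+2) j - Acg α N j) * (j:ℝ)^p = 0 := by
        intro j hj hjE
        simp only [Finset.mem_insert, Finset.mem_singleton] at hjE
        push_neg at hjE
        simp only [hS, Finset.mem_Icc] at hj
        by_cases hlt : |j| < (N:ℤ)
        · rw [Acg_eq_of_lt α N j hlt, sub_self, zero_mul]
        · have hb : |j| ≤ (N:ℤ)+2 := by
            rcases abs_cases j with ⟨he, _⟩ | ⟨he, _⟩ <;> push_cast at hj <;> omega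
        -- |j| ∈ {N, N+1, N+2}; N and N+2 excluded since j ∉ E
          have hmid : |j| = (N:ℤ)+1 := by
            rcases abs_cases j with ⟨he, _⟩ | ⟨he, _⟩ <;> omega
          rw [Acg_skip α N j hmid, Acg_big α N j (by omega), sub_self, zero_mul]
      rw [← Finset.sum_subset hsub hvanish]
      rw [Finset.sum_insert (by simp only [Finset.mem_insert, Finset.mem_singleton]; omega), Finset.sum_insert (by simp only [Finset.mem_insert, Finset.mem_singleton]; omega),
        Finset.sum_insert (by simp only [Finset.mem_insert, Finset.mem_singleton]; omega), Finset.sum_singleton]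
      have e1 : Acg α (N+2) (-((N:ℤ)+2)) = ella α ((N:ℤ)+1) := by
        have h := Acg_bd' α (N+2)
        convert h using 2 <;> push_cast <;> ring
      have e2 : Acg α (N+2) ((N:ℤ)+2) = ella α ((N:ℤ)+1) := by
        have h := Acg_bd α (N+2)
        convert h using 2 <;> push_cast <;> ring
      have e3 : Acg α (N+2) (-(N:ℤ)) = ella α ((N:ℤ)-1) - ella α ((N:ℤ)+1) :=
        Acg_mid' α N hNpos
      have e4 : Acg α (N+2) ((N:ℤ)) = ella α ((N:ℤ)-1) - ella α ((N:ℤ)+1) :=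
        Acg_mid α N hNpos
      have f1 : Acg α N (-((N:ℤ)+2)) = 0 := by
        apply Acg_big
        rw [abs_neg, abs_of_nonneg (by positivity)]
        omega
      have f2 : Acg α N ((N:ℤ)+2) = 0 := by
        apply Acg_big
        rw [abs_of_nonneg (by positivity)]
        omega
      have f3 : Acg α N (-(N:ℤ)) = ella α ((N:ℤ)-1) := Acg_bd' α N
      have f4 : Acg α N ((N:ℤ)) = ella α ((N:ℤ)-1) := Acg_bd α N
      rw [e1, e2, e3, e4, f1, f2, f3, f4]
      push_cast
      rw [hpe.neg_pow, hpe.neg_pow]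
      ring
  linarith [key]

lemma moment_even (α : ℝ) (p : ℕ) (hp : 0 < p) (hpe : Even p) (K : ℕ) :
    momentCG α p (2*K) = ∑ k ∈ range K,
      2 * ella α (2*(k:ℤ)+1) * ((2*(k:ℝ)+2)^p - (2*(k:ℝ))^p) := by
  induction K with
  | zero => simpa using moment_zero α p hp
  | succ K ih =>
    rw [show 2*(K+1) = 2*K+2 by ring, moment_rec α p hp hpe (2*K), ih, Finset.sum_range_succ]
    push_cast
    ring

lemma moment_odd (α : ℝ) (p : ℕ) (hp : 0 < p) (hpe : Even p) (K : ℕ) :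
    momentCG α p (2*K+1) = 2 * ella α 0 + ∑ k ∈ range K,
      2 * ella α (2*(k:ℤ)+2) * ((2*(k:ℝ)+3)^p - (2*(k:ℝ)+1)^p) := by
  induction K with
  | zero => simpa using moment_one α p hp hpe
  | succ K ih =>
    rw [show 2*(K+1)+1 = (2*K+1)+2 by ring, moment_rec α p hp hpe (2*K+1), ih,
      Finset.sum_range_succ, add_assoc]
    push_cast
    rw [show 2*(K:ℤ)+1+1 = 2*(K:ℤ)+2 by ring, show 2*(K:ℝ)+1+2 = 2*(K:ℝ)+3 by ring]

end helpers

/-- for `α ∈ (0,2]` and even `p > 2`, the `p`-th moment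
`⟨ΔX^p_n⟩ = Σ_{j=-n}^n A_j j^p` satisfies `⟨ΔX^p_n⟩/n^γ → ∞` if `0 ≤ γ < p-α`,
`→ 2p/(p-α)` if `γ = p-α`, and `→ 0` if `γ > p-α`; in particular
`⟨ΔX^p_n⟩ ∼ n^{p-α}`. -/
theorem moment_limit (α : ℝ) (hα : α ∈ Set.Ioc (0:ℝ) 2)
    (p : ℕ) (hp : Even p) (hp2 : 2 < p) :
    (∀ γ : ℝ, 0 ≤ γ → γ < (p:ℝ) - α →
      Tendsto (fun n : ℕ => momentCG α p n / (n:ℝ)^γ) atTop atTop) ∧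
    Tendsto (fun n : ℕ => momentCG α p n / (n:ℝ)^((p:ℝ) - α))
      atTop (nhds (2 * p / ((p:ℝ) - α))) ∧
    (∀ γ : ℝ, (p:ℝ) - α < γ →
      Tendsto (fun n : ℕ => momentCG α p n / (n:ℝ)^γ) atTop (nhds 0)) := by
  obtain ⟨hα0, hα2⟩ := hα
  have hp4 : 4 ≤ p := by
    obtain ⟨t, ht⟩ := hp
    omega
  have hpc : (4:ℝ) ≤ (p:ℝ) := by exact_mod_cast hp4
  have hp0 : 0 < p := by omega
  set β : ℝ := (p:ℝ) - 1 - α with hβdef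
  have hβpos : 0 < β := by rw [hβdef]; linarith
  have hβ1 : β + 1 = (p:ℝ) - α := by rw [hβdef]; ring
  have hpa : (0:ℝ) < (p:ℝ) - α := by linarith
  set C : ℝ := (2*(2:ℝ)^(-α)) * ((p:ℝ)*2^p) with hCdef
  -- even subsequence
  have h0 : Tendsto (fun k : ℕ =>
      (2 * ella α (2*(k:ℤ)+1) * ((2*(k:ℝ)+2)^p - (2*(k:ℝ))^p)) / (k:ℝ)^β) atTop (𝓝 C) := by
    have h := lim_coeff α hα0 p hp2 0
    apply Tendsto.congr _ h
    intro k
    have harg : ((2*k+1+0 : ℕ):ℤ) = 2*(k:ℤ)+1 := by push_cast; ring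
    rw [harg]
    norm_num
    rw [hβdef]
  have h1 : Tendsto (fun k : ℕ =>
      (2 * ella α (2*(k:ℤ)+2) * ((2*(k:ℝ)+3)^p - (2*(k:ℝ)+1)^p)) / (k:ℝ)^β) atTop (𝓝 C) := by
    have h := lim_coeff α hα0 p hp2 1
    apply Tendsto.congr _ h
    intro k
    have harg : ((2*k+1+1 : ℕ):ℤ) = 2*(k:ℤ)+2 := by push_cast; ring
    rw [harg]
    norm_num
    rw [show 2*(k:ℝ)+1+2 = 2*(k:ℝ)+3 by ring]
  have heC := weighted_cesaro hβpos h0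
  have hoC := weighted_cesaro hβpos h1
  have hKpow : Tendsto (fun K : ℕ => (K:ℝ)^(β+1)) atTop atTop :=
    (tendsto_rpow_atTop (by linarith)).comp tendsto_natCast_atTop_atTop
  have hconst : Tendsto (fun K : ℕ => (2 * ella α 0)/(K:ℝ)^(β+1)) atTop (𝓝 0) :=
    Tendsto.div_atTop tendsto_const_nhds hKpow
  have hevenK : Tendsto (fun K : ℕ => momentCG α p (2*K) / (K:ℝ)^(β+1)) atTop (𝓝 (C/(β+1))) := by
    apply Tendsto.congr _ heC
    intro K
    rw [moment_even α p hp0 hp K]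
  have hoddK : Tendsto (fun K : ℕ => momentCG α p (2*K+1) / (K:ℝ)^(β+1)) atTop (𝓝 (C/(β+1))) := by
    have h := hconst.add hoC
    rw [zero_add] at h
    apply Tendsto.congr _ h
    intro K
    rw [moment_odd α p hp0 hp K, add_div]
  -- shift to the true denominators
  have heven2 := tendsto_shift (by linarith : (0:ℝ) ≤ β+1) 2 0 two_pos le_rfl hevenK
  have hodd2 := tendsto_shift (by linarith : (0:ℝ) ≤ β+1) 2 1 two_pos zero_le_one hoddK
  -- the limit constant
  have hkey : (2:ℝ)^(-α) * 2^p * ((2:ℝ)^((p:ℝ)-α))⁻¹ = 1 := by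
    rw [← Real.rpow_natCast 2 p, ← Real.rpow_neg (by norm_num : (0:ℝ) ≤ 2),
      ← Real.rpow_add two_pos, ← Real.rpow_add two_pos]
    norm_num
  have hLval : (C/(β+1)) * ((2:ℝ)⁻¹)^(β+1) = 2*(p:ℝ)/((p:ℝ)-α) := by
    rw [hβ1, Real.inv_rpow (by norm_num : (0:ℝ) ≤ 2)]
    rw [div_mul_eq_mul_div]
    have hC2 : C * ((2:ℝ)^((p:ℝ)-α))⁻¹ = 2*(p:ℝ) := by
      calc C * ((2:ℝ)^((p:ℝ)-α))⁻¹
          = 2*(p:ℝ) * ((2:ℝ)^(-α) * 2^p * ((2:ℝ)^((p:ℝ)-α))⁻¹) := by rw [hCdef]; ring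
        _ = 2*(p:ℝ) := by rw [hkey, mul_one]
    rw [hC2]
  -- middle limit
  have hmid : Tendsto (fun n : ℕ => momentCG α p n / (n:ℝ)^((p:ℝ) - α))
      atTop (𝓝 (2 * p / ((p:ℝ) - α))) := by
    apply tendsto_even_odd
    · rw [← hLval]
      apply Tendsto.congr _ heven2
      intro K
      rw [hβ1]
      congr 2
      push_cast
      ring
    · rw [← hLval]
      apply Tendsto.congr _ hodd2
      intro K
      rw [hβ1]
      congr 2
      push_cast
      ring
  refine ⟨?_, hmid, ?_⟩
  · intro γ hγ0 hγ
    have hpow : Tendsto (fun n : ℕ => (n:ℝ)^((p:ℝ)-α-γ)) atTop atTop :=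
      (tendsto_rpow_atTop (by linarith)).comp tendsto_natCast_atTop_atTop
    have h := hmid.pos_mul_atTop (by positivity) hpow
    apply Tendsto.congr' _ h
    filter_upwards [eventually_ge_atTop 1] with n hn
    have hn0 : (0:ℝ) < n := by exact_mod_cast hn
    have hsplit : (n:ℝ)^((p:ℝ)-α) = (n:ℝ)^γ * (n:ℝ)^((p:ℝ)-α-γ) := by
      rw [← Real.rpow_add hn0]
      ring_nf
    rw [hsplit]
    have hg : (0:ℝ) < (n:ℝ)^γ := Real.rpow_pos_of_pos hn0 _
    have hg2 : (0:ℝ) < (n:ℝ)^((p:ℝ)-α-γ) := Real.rpow_pos_of_pos hn0 _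
    field_simp
  · intro γ hγ
    have hpow : Tendsto (fun n : ℕ => (n:ℝ)^((p:ℝ)-α-γ)) atTop (𝓝 0) := by
      have h := (tendsto_rpow_neg_atTop (by linarith : 0 < γ - ((p:ℝ)-α))).comp
        tendsto_natCast_atTop_atTop
      apply Tendsto.congr _ h
      intro n
      simp only [Function.comp_apply]
      rw [show (p:ℝ)-α-γ = -(γ-((p:ℝ)-α)) by ring]
    have h := hmid.mul hpow
    rw [mul_zero] at h
    apply Tendsto.congr' _ h
    filter_upwards [eventually_ge_atTop 1] with n hn
    have hn0 : (0:ℝ) < n := by exact_mod_cast hn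
    have hsplit : (n:ℝ)^((p:ℝ)-α) = (n:ℝ)^γ * (n:ℝ)^((p:ℝ)-α-γ) := by
      rw [← Real.rpow_add hn0]
      ring_nf
    rw [hsplit]
    have hg : (0:ℝ) < (n:ℝ)^γ := Real.rpow_pos_of_pos hn0 _
    have hg2 : (0:ℝ) < (n:ℝ)^((p:ℝ)-α-γ) := Real.rpow_pos_of_pos hn0 _
    field_simp
end
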